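/- Cascading Bellman value difference: For two cascading MDPs M' and M'' on the same state space, item set, and horizon H, differing in attraction probabilities (q' vs q''), transitions (p' vs p''), and rewards (r' vs r''), and for any deterministic policy π, step h, and state s, the difference of value functions satisfies V'^π_h(s) − V''^π_h(s) = Σ_{t=h}^{H} E_{q'',p'',π}[ g'(s_t, A_t) − g''(s_t, A_t) + (P'(s_t,A_t) − P''(s_t,A_t))^T V'^π_{t+1} | s_h = s ], where for an MDP with parameters (q,p,r): g(s,A) = Σ_i ∏_{j<i}(1−q(s,A(j)))·q(s,A(i))·r(s,A(i)) and P(s,A)(·) = Σ_i ∏_{j<i}(1−q(s,A(j)))·q(s,A(i))·p(·|s,A(i)), and the expectation is over trajectories generated by M'' under π. -/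

import Mathlib

/-- The cascading reward function. -/
noncomputable def cascadeF {α : Type*} (u w : α → ℝ) : List α → ℝ
  | [] => 0
  | a :: t => u a * w a + (1 - u a) * cascadeF u w t

/-- Value function of a cascading MDP under policy `π`, indexed by the number `n`
of remaining steps: `Vaux q p r π H n s = V^π_{H+1-n}(s)`, defined by the cascading
Bellman equation
`V^π_h(s) = Σ_i ∏_{j<i}(1−q(s,A(j)))·q(s,A(i))·(r(s,A(i)) + p(·|s,A(i))^T V^π_{h+1})`
with `A = π_h(s)` and `V^π_{H+1} = 0`. -/
noncomputable def Vaux {S α : Type*} [Fintype S]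
    (q : S → α → ℝ) (p : S → α → S → ℝ) (r : S → α → ℝ)
    (π : ℕ → S → List α) (H : ℕ) : ℕ → S → ℝ
  | 0, _ => 0
  | n + 1, s =>
      cascadeF (q s) (fun a => r s a + ∑ s', p s a s' * Vaux q p r π H n s')
        (π (H - n) s)

/-- State-occupancy measure of a cascading MDP under policy `π`, started at state
`s0` at step `h`: `occ q p π h s0 n s` is the probability of being in state `s` at
step `h + n`, using the cascading transition
`P(s₁,A)(s) = Σ_i ∏_{j<i}(1−q(s₁,A(j)))·q(s₁,A(i))·p(s|s₁,A(i))`. -/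
noncomputable def occ {S α : Type*} [Fintype S] [DecidableEq S]
    (q : S → α → ℝ) (p : S → α → S → ℝ) (π : ℕ → S → List α)
    (h : ℕ) (s0 : S) : ℕ → S → ℝ
  | 0, s => if s = s0 then 1 else 0
  | n + 1, s => ∑ s₁, occ q p π h s0 n s₁ *
      cascadeF (q s₁) (fun a => p s₁ a s) (π (h + n) s₁)

lemma cascadeF_add {α : Type*} (u w1 w2 : α → ℝ) (L : List α) :
    cascadeF u (fun a => w1 a + w2 a) L = cascadeF u w1 L + cascadeF u w2 L := by
  induction L with
  | nil => simp [cascadeF]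
  | cons a t ih => simp only [cascadeF, ih]; ring

lemma cascadeF_zero {α : Type*} (u : α → ℝ) (L : List α) :
    cascadeF u (fun _ => (0:ℝ)) L = 0 := by
  induction L with
  | nil => simp [cascadeF]
  | cons a t ih => simp [cascadeF, ih]

lemma cascadeF_mul_right {α : Type*} (u w : α → ℝ) (c : ℝ) (L : List α) :
    cascadeF u (fun a => w a * c) L = cascadeF u w L * c := by
  induction L with
  | nil => simp [cascadeF]
  | cons a t ih => simp only [cascadeF, ih]; ring

lemma cascadeF_sum {α β : Type*} [DecidableEq β] (u : α → ℝ) (t : Finset β)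
    (f : β → α → ℝ) (L : List α) :
    cascadeF u (fun a => ∑ b ∈ t, f b a) L = ∑ b ∈ t, cascadeF u (f b) L := by
  induction t using Finset.induction with
  | empty => simp [cascadeF_zero]
  | insert _ _ hnot ih =>
      rw [Finset.sum_insert hnot]
      simp only [Finset.sum_insert hnot, ← ih, ← cascadeF_add]

lemma cascadeF_decomp {α S : Type*} [Fintype S] [DecidableEq S] (u r : α → ℝ)
    (p : α → S → ℝ) (V : S → ℝ) (L : List α) :
    cascadeF u (fun a => r a + ∑ s', p a s' * V s') L =
      cascadeF u r L + ∑ s', cascadeF u (fun a => p a s') L * V s' := by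
  rw [cascadeF_add, cascadeF_sum]
  congr 1
  refine Finset.sum_congr rfl fun s' _ => ?_
  exact cascadeF_mul_right u (fun a => p a s') (V s') L

lemma occ_succ_left {S α : Type*} [Fintype S] [DecidableEq S]
    (q : S → α → ℝ) (p : S → α → S → ℝ) (π : ℕ → S → List α) :
    ∀ (m h : ℕ) (s0 st : S),
    occ q p π h s0 (m + 1) st =
      ∑ s₁, cascadeF (q s0) (fun a => p s0 a s₁) (π h s0) * occ q p π (h + 1) s₁ m st := by
  intro m
  induction m with
  | zero =>
      intro h s0 st
      simp [occ, Finset.sum_ite_eq, Finset.sum_ite_eq']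
  | succ m ih =>
      intro h s0 st
      have hπ : h + (m + 1) = (h + 1) + m := by omega
      calc occ q p π h s0 (m + 1 + 1) st
          = ∑ s₂, occ q p π h s0 (m + 1) s₂ *
              cascadeF (q s₂) (fun a => p s₂ a st) (π (h + (m + 1)) s₂) := rfl
        _ = ∑ s₂, (∑ s₁, cascadeF (q s0) (fun a => p s0 a s₁) (π h s0) *
              occ q p π (h + 1) s₁ m s₂) *
              cascadeF (q s₂) (fun a => p s₂ a st) (π ((h + 1) + m) s₂) := by
            rw [hπ]
            exact Finset.sum_congr rfl fun s₂ _ => by rw [ih]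
        _ = ∑ s₁, cascadeF (q s0) (fun a => p s0 a s₁) (π h s0) *
              ∑ s₂, occ q p π (h + 1) s₁ m s₂ *
                cascadeF (q s₂) (fun a => p s₂ a st) (π ((h + 1) + m) s₂) := by
            simp only [Finset.sum_mul, Finset.mul_sum, mul_assoc]
            rw [Finset.sum_comm]
        _ = ∑ s₁, cascadeF (q s0) (fun a => p s0 a s₁) (π h s0) *
              occ q p π (h + 1) s₁ (m + 1) st := rfl

noncomputable def Eterm {S α : Type*} [Fintype S]
    (q' q'' : S → α → ℝ) (p' p'' : S → α → S → ℝ) (r' r'' : S → α → ℝ)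
    (π : ℕ → S → List α) (H : ℕ) (t : ℕ) (st : S) : ℝ :=
  (cascadeF (q' st) (r' st) (π t st) - cascadeF (q'' st) (r'' st) (π t st))
    + ∑ s' : S,
        (cascadeF (q' st) (fun a => p' st a s') (π t st)
          - cascadeF (q'' st) (fun a => p'' st a s') (π t st))
          * Vaux q' p' r' π H (H - t) s'

lemma value_diff_aux {S α : Type*} [Fintype S] [DecidableEq S]
    (q' q'' : S → α → ℝ) (p' p'' : S → α → S → ℝ) (r' r'' : S → α → ℝ)
    (π : ℕ → S → List α) (H : ℕ) :
    ∀ n, n ≤ H + 1 → ∀ s : S,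
    Vaux q' p' r' π H n s - Vaux q'' p'' r'' π H n s =
      ∑ t ∈ Finset.Icc (H + 1 - n) H, ∑ st : S,
        occ q'' p'' π (H + 1 - n) s (t - (H + 1 - n)) st *
          Eterm q' q'' p' p'' r' r'' π H t st := by
  intro n
  induction n with
  | zero =>
      intro _ s
      rw [Finset.Icc_eq_empty (by omega)]
      simp [Vaux]
  | succ n ih =>
      intro hn s
      have hnH : n ≤ H := by omega
      have e1 : H + 1 - (n + 1) = H - n := by omega
      have e2 : H + 1 - n = (H - n) + 1 := by omega
      set h := H - n with hdef
      have e3 : H - h = n := by omega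
      have e4 : h ≤ H := by omega
      rw [e1]
      -- split the Icc at t = h
      have hsplit : Finset.Icc h H = insert h (Finset.Icc (h + 1) H) := by
        ext t; simp only [Finset.mem_Icc, Finset.mem_insert]; omega
      have hnotmem : h ∉ Finset.Icc (h + 1) H := by simp
      rw [hsplit, Finset.sum_insert hnotmem]
      -- the t = h term
      have hterm : (∑ st : S, occ q'' p'' π h s (h - h) st *
            Eterm q' q'' p' p'' r' r'' π H h st) =
          Eterm q' q'' p' p'' r' r'' π H h s := by
        simp [occ, Nat.sub_self]
      rw [hterm]
      -- the remaining terms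
      have hrest : (∑ t ∈ Finset.Icc (h + 1) H, ∑ st : S,
            occ q'' p'' π h s (t - h) st * Eterm q' q'' p' p'' r' r'' π H t st) =
          ∑ s₁, cascadeF (q'' s) (fun a => p'' s a s₁) (π h s) *
            (Vaux q' p' r' π H n s₁ - Vaux q'' p'' r'' π H n s₁) := by
        have step1 : ∀ t ∈ Finset.Icc (h + 1) H,
            (∑ st : S, occ q'' p'' π h s (t - h) st *
                Eterm q' q'' p' p'' r' r'' π H t st) =
            ∑ s₁, cascadeF (q'' s) (fun a => p'' s a s₁) (π h s) *
              ∑ st : S, occ q'' p'' π (h + 1) s₁ (t - (h + 1)) st *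
                Eterm q' q'' p' p'' r' r'' π H t st := by
          intro t ht
          simp only [Finset.mem_Icc] at ht
          have htm : t - h = (t - (h + 1)) + 1 := by omega
          rw [htm]
          rw [show (∑ st : S, occ q'' p'' π h s ((t - (h + 1)) + 1) st *
              Eterm q' q'' p' p'' r' r'' π H t st) =
            ∑ st : S, (∑ s₁, cascadeF (q'' s) (fun a => p'' s a s₁) (π h s) *
              occ q'' p'' π (h + 1) s₁ (t - (h + 1)) st) *
                Eterm q' q'' p' p'' r' r'' π H t st from
            Finset.sum_congr rfl fun st _ => by rw [occ_succ_left]]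
          simp only [Finset.sum_mul, Finset.mul_sum, mul_assoc]
          rw [Finset.sum_comm]
        rw [Finset.sum_congr rfl step1, Finset.sum_comm]
        refine Finset.sum_congr rfl fun s₁ _ => ?_
        rw [← Finset.mul_sum]
        congr 1
        have := ih (by omega) s₁
        rw [e2] at this
        exact this.symm
      rw [hrest]
      -- unfold the value functions one step and conclude by algebra
      have hV' : ∀ s : S, Vaux q' p' r' π H (n + 1) s =
          cascadeF (q' s) (r' s) (π h s) +
            ∑ s', cascadeF (q' s) (fun a => p' s a s') (π h s) *
              Vaux q' p' r' π H n s' := by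
        intro s
        show cascadeF (q' s) (fun a => r' s a + ∑ s', p' s a s' *
            Vaux q' p' r' π H n s') (π (H - n) s) = _
        rw [cascadeF_decomp, hdef]
      have hV'' : ∀ s : S, Vaux q'' p'' r'' π H (n + 1) s =
          cascadeF (q'' s) (r'' s) (π h s) +
            ∑ s', cascadeF (q'' s) (fun a => p'' s a s') (π h s) *
              Vaux q'' p'' r'' π H n s' := by
        intro s
        show cascadeF (q'' s) (fun a => r'' s a + ∑ s', p'' s a s' *
            Vaux q'' p'' r'' π H n s') (π (H - n) s) = _
        rw [cascadeF_decomp, hdef]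
      rw [hV', hV'', Eterm, e3]
      simp only [sub_mul, mul_sub, Finset.sum_sub_distrib]
      ring

/-- Cascading value difference lemma: for two cascading MDPs `M'` and `M''` sharing
states, items and horizon, and any policy `π`, step `h ≤ H + 1` and state `s`,
`V'^π_h(s) − V''^π_h(s) = Σ_{t=h}^{H} E_{q'',p'',π}[ g'(s_t,A_t) − g''(s_t,A_t)
  + (P'(s_t,A_t) − P''(s_t,A_t))^T V'^π_{t+1} | s_h = s ]`,
where `g(s,A) = Σ_i ∏_{j<i}(1−q)·q·r` and `P(s,A)(·) = Σ_i ∏_{j<i}(1−q)·q·p(·|s,A(i))`,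
and the expectation over trajectories of `M''` is expressed via the occupancy
measure `occ`. -/
theorem cascading_value_difference {S α : Type*} [Fintype S] [DecidableEq S]
    (q' q'' : S → α → ℝ) (p' p'' : S → α → S → ℝ) (r' r'' : S → α → ℝ)
    (π : ℕ → S → List α) (H : ℕ) (h : ℕ) (s : S)
    (hh : h ≤ H + 1)
    (hq' : ∀ s a, 0 ≤ q' s a ∧ q' s a ≤ 1) (hq'' : ∀ s a, 0 ≤ q'' s a ∧ q'' s a ≤ 1)
    (hp' : ∀ s a, (∀ s', 0 ≤ p' s a s') ∧ ∑ s', p' s a s' = 1)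
    (hp'' : ∀ s a, (∀ s', 0 ≤ p'' s a s') ∧ ∑ s', p'' s a s' = 1) :
    Vaux q' p' r' π H (H + 1 - h) s - Vaux q'' p'' r'' π H (H + 1 - h) s =
      ∑ t ∈ Finset.Icc h H, ∑ st : S,
        occ q'' p'' π h s (t - h) st *
          ((cascadeF (q' st) (r' st) (π t st)
              - cascadeF (q'' st) (r'' st) (π t st))
            + ∑ s' : S,
                (cascadeF (q' st) (fun a => p' st a s') (π t st)
                  - cascadeF (q'' st) (fun a => p'' st a s') (π t st))
                  * Vaux q' p' r' π H (H - t) s') := by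
  have := value_diff_aux q' q'' p' p'' r' r'' π H (H + 1 - h) (by omega) s
  rw [show H + 1 - (H + 1 - h) = h from by omega] at this
  simpa [Eterm] using this
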